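/- For n ≥ 1, the matrix V_n := P·(H ⊗ I^{⊗(n-1)}) satisfies V_n^n = H^{⊗n}, where P is the permutation matrix of the cyclic shift of qubits sending the basis state |a₁a₂...aₙ⟩ to |aₙa₁...a_{n-1}⟩. -/

import Mathlib

open Matrix

noncomputable section

/-- The 2×2 Hadamard matrix. -/
def Hm : Matrix (Fin 2) (Fin 2) ℝ :=
  !![1/Real.sqrt 2, 1/Real.sqrt 2; 1/Real.sqrt 2, -(1/Real.sqrt 2)]

/-- The Pauli X matrix. -/
def Xm : Matrix (Fin 2) (Fin 2) ℝ := !![0, 1; 1, 0]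

/-- The Pauli Z matrix. -/
def Zm : Matrix (Fin 2) (Fin 2) ℝ := !![1, 0; 0, -1]

/-- n-fold Kronecker (tensor) power of a 2×2 matrix, with basis indexed by
bit strings `Fin n → Fin 2` (position 0 = first/most significant qubit). -/
def tpow (M : Matrix (Fin 2) (Fin 2) ℝ) (n : ℕ) :
    Matrix (Fin n → Fin 2) (Fin n → Fin 2) ℝ :=
  Matrix.of fun x y => ∏ i, M (x i) (y i)

/-- The 2×2 matrix `M` acting on qubit `p`, identity on all other qubits. -/
def gateAt (M : Matrix (Fin 2) (Fin 2) ℝ) {n : ℕ} (p : Fin n) :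
    Matrix (Fin n → Fin 2) (Fin n → Fin 2) ℝ :=
  Matrix.of fun x y =>
    M (x p) (y p) * ∏ i ∈ Finset.univ.erase p, (if x i = y i then (1 : ℝ) else 0)

/-- The cyclic shift of the tensor factors on bit strings: `shiftFun n a`
reads position `i+1` of `a` at position `i`. -/
def shiftFun (n : ℕ) : (Fin (n + 1) → Fin 2) → (Fin (n + 1) → Fin 2) :=
  fun a i => a (i + 1)

/-- The permutation matrix of the cyclic shift of the qubits
`|a₁a₂…aₙ⟩ ↦ |aₙa₁…a_{n-1}⟩` (the row indexed by `x` has its 1 in the column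
indexed by `shiftFun n x`, i.e. the basis vector of `x₂…xₙx₁` is sent to the
basis vector of `x`); this is the permutation `(1,3,…,2ⁿ−1,2,4,…,2ⁿ)`. -/
def Pshift (n : ℕ) : Matrix (Fin (n + 1) → Fin 2) (Fin (n + 1) → Fin 2) ℝ :=
  Matrix.of fun x y => if x = shiftFun n y then 1 else 0

/-- The matrix `V_{n+1} = P · (H ⊗ I^{⊗ n})` on `n+1` qubits. -/
def Vmat (n : ℕ) : Matrix (Fin (n + 1) → Fin 2) (Fin (n + 1) → Fin 2) ℝ :=
  Pshift n * gateAt Hm (0 : Fin (n + 1))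

/-- `P_n(i)`: diagonal matrix with `-1` at the basis vector indexed by `i`
and `+1` elsewhere. -/
def PnDiag {n : ℕ} (i : Fin n → Fin 2) :
    Matrix (Fin n → Fin 2) (Fin n → Fin 2) ℝ :=
  Matrix.diagonal fun x => if x = i then -1 else 1

namespace VmatProof

open Fin.NatCast

def prodMat {n : ℕ} (f : Fin n → Matrix (Fin 2) (Fin 2) ℝ) :
    Matrix (Fin n → Fin 2) (Fin n → Fin 2) ℝ :=
  Matrix.of fun x y => ∏ i, f i (x i) (y i)

lemma prodMat_mul {n : ℕ} (f g : Fin n → Matrix (Fin 2) (Fin 2) ℝ) :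
    prodMat f * prodMat g = prodMat fun i => f i * g i := by
  ext x y
  simp only [prodMat, Matrix.mul_apply, Matrix.of_apply]
  have h1 : ∀ z : Fin n → Fin 2,
      (∏ i, f i (x i) (z i)) * ∏ i, g i (z i) (y i)
        = ∏ i, f i (x i) (z i) * g i (z i) (y i) := by
    intro z; rw [Finset.prod_mul_distrib]
  simp_rw [h1]
  rw [Finset.prod_univ_sum, Fintype.piFinset_univ]

lemma prodMat_one {n : ℕ} :
    prodMat (fun _ : Fin n => (1 : Matrix (Fin 2) (Fin 2) ℝ)) = 1 := by
  ext x y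
  simp only [prodMat, Matrix.of_apply]
  rw [Matrix.one_apply]
  by_cases h : x = y
  · subst h; simp
  · rw [if_neg h]
    obtain ⟨i, hi⟩ : ∃ i, x i ≠ y i := by
      by_contra hc; push_neg at hc; exact h (funext hc)
    exact Finset.prod_eq_zero (Finset.mem_univ i) (by simp [Matrix.one_apply, hi])

lemma gateAt_eq {n : ℕ} (M : Matrix (Fin 2) (Fin 2) ℝ) (p : Fin n) :
    gateAt M p = prodMat fun i => if i = p then M else 1 := by
  ext x y
  simp only [gateAt, prodMat, Matrix.of_apply]
  rw [← Finset.mul_prod_erase Finset.univ _ (Finset.mem_univ p), if_pos rfl]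
  congr 1
  refine Finset.prod_congr rfl fun i hi => ?_
  rw [if_neg (Finset.ne_of_mem_erase hi), Matrix.one_apply]

lemma Pshift_mul {n : ℕ} (A : Matrix (Fin (n+1) → Fin 2) (Fin (n+1) → Fin 2) ℝ) :
    Pshift n * A = Matrix.of fun x y => A (fun j => x (j - 1)) y := by
  ext x y
  simp only [Pshift, Matrix.mul_apply, Matrix.of_apply]
  have h : ∀ z : Fin (n+1) → Fin 2, (x = shiftFun n z) ↔ z = fun j => x (j - 1) := by
    intro z
    constructor
    · intro h; funext j; rw [h]; simp [shiftFun]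
    · intro h; subst h; funext i; simp [shiftFun]
  simp_rw [h, ite_mul, one_mul, zero_mul]
  simp

lemma mul_Pshift {n : ℕ} (A : Matrix (Fin (n+1) → Fin 2) (Fin (n+1) → Fin 2) ℝ) :
    A * Pshift n = Matrix.of fun x y => A x (shiftFun n y) := by
  ext x y
  simp only [Pshift, Matrix.mul_apply, Matrix.of_apply, mul_ite, mul_one, mul_zero]
  simp

lemma Pshift_mul_prodMat {n : ℕ} (f : Fin (n+1) → Matrix (Fin 2) (Fin 2) ℝ) :
    Pshift n * prodMat f = prodMat (fun i => f (i + 1)) * Pshift n := by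
  rw [Pshift_mul, mul_Pshift]
  ext x y
  simp only [prodMat, Matrix.of_apply, shiftFun]
  exact (Fintype.prod_equiv (Equiv.addRight (1 : Fin (n+1)))
    (fun i => f (i + 1) (x i) (y (i + 1)))
    (fun j => f j (x (j - 1)) (y j))
    (by intro i; simp [Equiv.coe_addRight])).symm

lemma Pshift_pow_mul_prodMat {n : ℕ} (m : ℕ) (f : Fin (n+1) → Matrix (Fin 2) (Fin 2) ℝ) :
    Pshift n ^ m * prodMat f = prodMat (fun i => f (i + (m : Fin (n+1)))) * Pshift n ^ m := by
  induction m with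
  | zero => simp
  | succ m ih =>
      have h : (fun i : Fin (n+1) => f (i + 1 + (m : Fin (n+1))))
          = fun i => f (i + ((m + 1 : ℕ) : Fin (n+1))) := by
        funext i; push_cast; congr 1; abel
      calc Pshift n ^ (m + 1) * prodMat f
          = Pshift n * (Pshift n ^ m * prodMat f) := by rw [← mul_assoc, ← pow_succ']
        _ = Pshift n * (prodMat (fun i => f (i + (m : Fin (n+1)))) * Pshift n ^ m) := by
              rw [ih]
        _ = (Pshift n * prodMat (fun i => f (i + (m : Fin (n+1))))) * Pshift n ^ m := by
              rw [mul_assoc]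
        _ = (prodMat (fun i => f (i + 1 + (m : Fin (n+1)))) * Pshift n) * Pshift n ^ m := by
              rw [Pshift_mul_prodMat]
        _ = prodMat (fun i => f (i + ((m + 1 : ℕ) : Fin (n+1)))) * Pshift n ^ (m + 1) := by
              rw [h, mul_assoc, ← pow_succ']

lemma Pshift_pow {n : ℕ} (m : ℕ) :
    Pshift n ^ m = Matrix.of fun x y =>
      if x = fun i => y (i + (m : Fin (n+1))) then 1 else 0 := by
  induction m with
  | zero =>
      ext x y
      simp [Matrix.one_apply]
  | succ m ih =>
      rw [pow_succ, ih, mul_Pshift]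
      ext x y
      simp only [Matrix.of_apply, shiftFun]
      have h : (fun i => y (i + (m : Fin (n+1)) + 1))
          = fun i => y (i + ((m + 1 : ℕ) : Fin (n+1))) := by
        funext i; congr 1; push_cast; abel
      simp only [h]

lemma Pshift_pow_self {n : ℕ} : Pshift n ^ (n + 1) = 1 := by
  rw [Pshift_pow]
  ext x y
  simp [Matrix.one_apply, Fin.natCast_self, eq_comm]

lemma cond_iff {n k : ℕ} (hk : k ≤ n) (i : Fin (n+1)) :
    i + ((k + 1 : ℕ) : Fin (n+1)) = 0 ↔ (i : ℕ) + k = n := by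
  have h1 : (((n - k : ℕ) : Fin (n+1))) + ((k + 1 : ℕ) : Fin (n+1)) = 0 := by
    rw [← Nat.cast_add]
    have h2 : (n - k) + (k + 1) = n + 1 := by omega
    rw [h2, Fin.natCast_self]
  have hv : (((n - k : ℕ) : Fin (n+1)) : ℕ) = n - k := by
    rw [Fin.val_natCast]
    exact Nat.mod_eq_of_lt (by omega)
  constructor
  · intro h
    have h3 : i = ((n - k : ℕ) : Fin (n+1)) := add_right_cancel (h.trans h1.symm)
    have : (i : ℕ) = n - k := by rw [h3, hv]
    omega
  · intro h
    have h3 : i = ((n - k : ℕ) : Fin (n+1)) := by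
      apply Fin.ext
      rw [hv]; omega
    rw [h3, h1]

lemma Vmat_pow (n k : ℕ) (hk : k ≤ n + 1) :
    Vmat n ^ k
      = prodMat (fun i : Fin (n+1) => if n < (i : ℕ) + k then Hm else 1) * Pshift n ^ k := by
  induction k with
  | zero =>
      have h : (fun i : Fin (n+1) => if n < (i : ℕ) + 0 then Hm else 1)
          = fun _ => (1 : Matrix (Fin 2) (Fin 2) ℝ) := by
        funext i
        rw [if_neg (by have := i.isLt; omega)]
      rw [pow_zero, pow_zero, h, prodMat_one, one_mul]
  | succ k ih =>
      have hk' : k ≤ n := by omega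
      rw [pow_succ, ih (by omega), Vmat, gateAt_eq]
      rw [mul_assoc, ← mul_assoc (Pshift n ^ k) (Pshift n), ← pow_succ]
      rw [Pshift_pow_mul_prodMat, ← mul_assoc, prodMat_mul]
      refine congrArg (fun M => M * Pshift n ^ (k + 1)) ?_
      refine congrArg prodMat ?_
      funext i
      beta_reduce
      have hcond : (i + ((k + 1 : ℕ) : Fin (n+1)) = 0) ↔ (i : ℕ) + k = n := cond_iff hk' i
      by_cases h1 : n < (i : ℕ) + k
      · rw [if_pos h1, if_neg (by rw [hcond]; omega), if_pos (by omega), mul_one]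
      · by_cases h2 : (i : ℕ) + k = n
        · rw [if_neg h1, if_pos (hcond.mpr h2), if_pos (by omega), one_mul]
        · rw [if_neg h1, if_neg (by rw [hcond]; omega), if_neg (by omega), mul_one]

end VmatProof

/-- for every n ≥ 1 (written n+1), `V_n^n = H^{⊗n}`. -/
theorem Vmat_pow_eq_tpow_hadamard (n : ℕ) :
    Vmat n ^ (n + 1) = tpow Hm (n + 1) := by
  rw [VmatProof.Vmat_pow n (n + 1) le_rfl, VmatProof.Pshift_pow_self, mul_one]
  have h : (fun i : Fin (n+1) => if n < (i : ℕ) + (n + 1) then Hm else 1) = fun _ => Hm := by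
    funext i
    rw [if_pos (by omega)]
  rw [h]
  rfl
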